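/- Let (X,x) be a pointed metric space, and let β ≥ 0, C > 1 and R̄ > 0. Suppose that for every ε > 0 there exist a pointed metric space (Y,y) with dim_A(Y,C,R̄) ≤ β and an ε-coupling between (X,x) and (Y,y). Then dim_A(X,C,R̄) ≤ β. (This is the statement that a pointed Gromov–Hausdorff limit of metric spaces whose Assouad dimension is at most β with constant C up to scale R̄ again has Assouad dimension at most β with constant C up to scale R̄.) -/
import Mathlib


open Metric Set

/-- The set `A` in a space with distance function `d` has Nagata dimension at most `n`
with constant `c` at scale `s` (written `dim_N(A,c,s) ≤ n` in the paper): there is a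
cover `𝒰 = ⋃_{k=0}^n 𝒰 k` of `A` by subsets of `A`, each member having diameter at
most `s`, such that each family `𝒰 k` is `c*s`-separated. -/
def dimNle {X : Type*} (d : X → X → ℝ) (A : Set X) (c s : ℝ) (n : ℕ) : Prop :=
  ∃ 𝒰 : Fin (n + 1) → Set (Set X),
    (∀ k, ∀ U ∈ 𝒰 k, U ⊆ A) ∧
    (∀ p ∈ A, ∃ k, ∃ U ∈ 𝒰 k, p ∈ U) ∧
    (∀ k, ∀ U ∈ 𝒰 k, ∀ a ∈ U, ∀ b ∈ U, d a b ≤ s) ∧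
    (∀ k, ∀ U ∈ 𝒰 k, ∀ V ∈ 𝒰 k, U ≠ V → ∀ a ∈ U, ∀ b ∈ V, c * s ≤ d a b)

/-- `dimAle d A C Rbar β` (written `dim_A(A,C,Rbar) ≤ β` in the paper): for all
`0 < r < R < Rbar` and every `x ∈ A`, the ball of radius `R` around `x` in `A` can be
covered by at most `C * (R/r)^β` balls of radius `r` with centers in `A`. -/
def dimAle {X : Type*} (d : X → X → ℝ) (A : Set X) (C Rbar β : ℝ) : Prop :=
  ∀ r R : ℝ, 0 < r → r < R → R < Rbar → ∀ x ∈ A,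
    ∃ T : Finset X, ↑T ⊆ A ∧ (T.card : ℝ) ≤ C * (R / r) ^ β ∧
      ∀ z ∈ A, d z x < R → ∃ t ∈ T, d z t < r

/-- `d` is a metric distance function on `Y`: symmetric, triangle inequality, and
vanishing exactly on the diagonal. -/
def IsMetricDist {Y : Type*} (d : Y → Y → ℝ) : Prop :=
  (∀ a b, d a b = d b a) ∧ (∀ a b c, d a c ≤ d a b + d b c) ∧ (∀ a b, d a b = 0 ↔ a = b)

/-- An `ε`-coupling between the pointed spaces `(A, dA, a₀)` and `(B, dB, b₀)`:
a pseudometric on the disjoint union extending `dA` and `dB`, with `d(a₀,b₀) ≤ ε`,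
every point of `B_A(a₀,1/ε)` within distance `< ε` of a point of `B`, and every point
of `B_B(b₀,1/ε)` within distance `< ε` of a point of `A`. -/
def IsCoupling {A B : Type*} (dA : A → A → ℝ) (dB : B → B → ℝ) (a₀ : A) (b₀ : B)
    (ε : ℝ) (d : A ⊕ B → A ⊕ B → ℝ) : Prop :=
  (∀ p q, d p q = d q p) ∧
  (∀ p, d p p = 0) ∧
  (∀ p q r, d p r ≤ d p q + d q r) ∧
  (∀ u v : A, d (Sum.inl u) (Sum.inl v) = dA u v) ∧
  (∀ u v : B, d (Sum.inr u) (Sum.inr v) = dB u v) ∧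
  d (Sum.inl a₀) (Sum.inr b₀) ≤ ε ∧
  (∀ u : A, dA u a₀ < 1 / ε → ∃ v : B, d (Sum.inl u) (Sum.inr v) < ε) ∧
  (∀ v : B, dB v b₀ < 1 / ε → ∃ u : A, d (Sum.inl u) (Sum.inr v) < ε)

universe u

/-- If for every `ε > 0` there is a pointed metric space `(Y,y)` with
`dim_A(Y,C,R̄) ≤ β` and an `ε`-coupling between `(X,x)` and `(Y,y)`, then
`dim_A(X,C,R̄) ≤ β`. -/
theorem assouad_of_gh_limit {X : Type*} [MetricSpace X] (x : X) (β C Rbar : ℝ)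
    (hβ : 0 ≤ β) (hC : 1 < C) (hR : 0 < Rbar)
    (h : ∀ ε : ℝ, 0 < ε → ∃ (Y : Type u) (dY : Y → Y → ℝ) (y : Y)
        (d : X ⊕ Y → X ⊕ Y → ℝ),
      IsMetricDist dY ∧ dimAle dY Set.univ C Rbar β ∧
      IsCoupling (fun a b : X => dist a b) dY x y ε d) :
    dimAle (fun a b : X => dist a b) Set.univ C Rbar β := by
  classical
  intro r R hr hrR hRbar x₀ _
  have hR0 : 0 < R := lt_trans hr hrR
  set K := dist x₀ x with hKdef
  have hK0 : 0 ≤ K := dist_nonneg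
  have hRr : 0 < R / r := div_pos hR0 hr
  have hC0 : 0 < C := lt_trans one_pos hC
  have hs0 : 0 ≤ C * (R / r) ^ β := by positivity
  set M := ⌊C * (R / r) ^ β⌋₊ with hMdef
  have hM1 : C * (R / r) ^ β < (M : ℝ) + 1 := Nat.lt_floor_add_one _
  -- continuity of the perturbed bound at ε = 0
  have hcont : ContinuousAt (fun e : ℝ => C * ((R + 2 * e) / (r - 2 * e)) ^ β) 0 := by
    have h1 : ContinuousAt (fun e : ℝ => (R + 2 * e) / (r - 2 * e)) 0 := by
      apply ContinuousAt.div (by fun_prop) (by fun_prop)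
      simp only [mul_zero, sub_zero]
      linarith
    exact continuousAt_const.mul (h1.rpow_const (Or.inr hβ))
  have hlim : ∀ᶠ e in nhds (0 : ℝ),
      C * ((R + 2 * e) / (r - 2 * e)) ^ β < (M : ℝ) + 1 := by
    have h3 : Filter.Tendsto (fun e : ℝ => C * ((R + 2 * e) / (r - 2 * e)) ^ β)
        (nhds 0) (nhds (C * (R / r) ^ β)) := by
      have h4 := hcont
      rw [ContinuousAt] at h4
      norm_num at h4
      exact h4
    exact h3.eventually_lt_const hM1
  obtain ⟨δ, hδ, hP⟩ := Metric.eventually_nhds_iff.mp hlim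
  -- choose ε
  have hKRr5 : 0 < K + R + r + 5 := by linarith
  set ε := min (min (δ / 2) (r / 4)) (min ((Rbar - R) / 4) (1 / (K + R + r + 5)))
    with hεdef
  have hεpos : 0 < ε := by
    apply lt_min (lt_min (by linarith) (by linarith))
    exact lt_min (by linarith) (by positivity)
  have hεδ : ε < δ :=
    lt_of_le_of_lt (le_trans (min_le_left _ _) (min_le_left _ _)) (by linarith)
  have hεr : 2 * ε < r := by
    have h1 : ε ≤ r / 4 :=
      le_trans (min_le_left (min (δ / 2) (r / 4)) _) (min_le_right (δ / 2) (r / 4))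
    linarith
  have hεR : R + 2 * ε < Rbar := by
    have h1 : ε ≤ (Rbar - R) / 4 :=
      le_trans (min_le_right (min (δ / 2) (r / 4)) _)
        (min_le_left ((Rbar - R) / 4) (1 / (K + R + r + 5)))
    linarith
  have hεinv : K + R + r + 5 ≤ 1 / ε := by
    have h1 : ε ≤ 1 / (K + R + r + 5) :=
      le_trans (min_le_right _ _) (min_le_right _ _)
    have := one_div_le_one_div_of_le hεpos h1
    rwa [one_div_one_div] at this
  have hε5 : ε ≤ 1 / 5 := by
    have h1 : ε ≤ 1 / (K + R + r + 5) :=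
      le_trans (min_le_right _ _) (min_le_right _ _)
    have h2 : 1 / (K + R + r + 5) ≤ 1 / 5 :=
      one_div_le_one_div_of_le (by norm_num) (by linarith)
    linarith
  obtain ⟨Y, dY, y, dc, hmet, hdim, hcoup⟩ := h ε hεpos
  obtain ⟨ysymm, ytri, yzero⟩ := hmet
  obtain ⟨csymm, czero, ctri, cXX, cYY, cbase, cXY, cYX⟩ := hcoup
  -- find y₀ near x₀
  obtain ⟨y₀, hy₀⟩ := cXY x₀ (by simp only; linarith)
  set R' := R + 2 * ε with hR'def
  set r' := r - 2 * ε with hr'def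
  have hr'0 : 0 < r' := by simp only [hr'def]; linarith
  have hdYy₀ : dY y₀ y ≤ K + 2 * ε := by
    have h1 : dc (Sum.inr y₀) (Sum.inr y) ≤
        dc (Sum.inr y₀) (Sum.inl x₀) + dc (Sum.inl x₀) (Sum.inr y) := ctri _ _ _
    have h2 : dc (Sum.inl x₀) (Sum.inr y) ≤
        dc (Sum.inl x₀) (Sum.inl x) + dc (Sum.inl x) (Sum.inr y) := ctri _ _ _
    have h3 : dc (Sum.inr y₀) (Sum.inl x₀) = dc (Sum.inl x₀) (Sum.inr y₀) := csymm _ _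
    have h4 : dc (Sum.inl x₀) (Sum.inl x) = K := cXX x₀ x
    have h5 : dY y₀ y = dc (Sum.inr y₀) (Sum.inr y) := (cYY y₀ y).symm
    linarith [cbase]
  -- apply Assouad bound in Y
  obtain ⟨S, hSsub, hScard, hScov⟩ := hdim r' R' hr'0
    (by simp only [hr'def, hR'def]; linarith)
    (by simp only [hR'def]; linarith) y₀ (Set.mem_univ _)
  have hcardM : (S.card : ℝ) < (M : ℝ) + 1 := by
    refine lt_of_le_of_lt hScard ?_
    have := hP (show dist ε (0 : ℝ) < δ by
      rw [Real.dist_eq, sub_zero, abs_of_pos hεpos]; exact hεδ)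
    simpa [hR'def, hr'def] using this
  have hSM : S.card ≤ M := by
    have : (S.card : ℝ) < (M : ℝ) + 1 := hcardM
    exact_mod_cast Nat.lt_succ_iff.mp (by exact_mod_cast this)
  -- filter to useful centers and pull them back
  set S' := S.filter (fun t => dY t y₀ < R' + r') with hS'def
  have key : ∀ t ∈ S', ∃ u : X, dc (Sum.inl u) (Sum.inr t) < ε := by
    intro t ht
    have h1 : dY t y₀ < R' + r' := (Finset.mem_filter.mp ht).2
    apply cYX
    have h2 : dY t y ≤ dY t y₀ + dY y₀ y := ytri _ _ _
    have : R' + r' = R + r := by simp only [hR'def, hr'def]; ring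
    linarith
  set T := S'.attach.image (fun t => (key t.1 t.2).choose) with hTdef
  refine ⟨T, Set.subset_univ _, ?_, ?_⟩
  · have h1 : T.card ≤ S'.card := by
      calc T.card ≤ S'.attach.card := Finset.card_image_le
        _ = S'.card := Finset.card_attach
    have h2 : S'.card ≤ S.card := Finset.card_filter_le _ _
    have h3 : (T.card : ℝ) ≤ (M : ℝ) := by
      exact_mod_cast le_trans h1 (le_trans h2 hSM)
    exact le_trans h3 (Nat.floor_le hs0)
  · intro z _ hz
    have hzx : dist z x < 1 / ε := by
      have := dist_triangle z x₀ x
      simp only at hz ⊢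
      linarith
    obtain ⟨z', hz'⟩ := cXY z hzx
    have hz'y₀ : dY z' y₀ < R' := by
      have h1 : dc (Sum.inr z') (Sum.inr y₀) ≤
          dc (Sum.inr z') (Sum.inl z) + dc (Sum.inl z) (Sum.inr y₀) := ctri _ _ _
      have h2 : dc (Sum.inl z) (Sum.inr y₀) ≤
          dc (Sum.inl z) (Sum.inl x₀) + dc (Sum.inl x₀) (Sum.inr y₀) := ctri _ _ _
      have h3 : dc (Sum.inr z') (Sum.inl z) = dc (Sum.inl z) (Sum.inr z') := csymm _ _
      have h4 : dc (Sum.inl z) (Sum.inl x₀) = dist z x₀ := cXX z x₀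
      have h5 : dY z' y₀ = dc (Sum.inr z') (Sum.inr y₀) := (cYY z' y₀).symm
      simp only at hz
      simp only [hR'def]
      linarith
    obtain ⟨t, htS, htz'⟩ := hScov z' (Set.mem_univ _) hz'y₀
    have htS' : t ∈ S' := by
      refine Finset.mem_filter.mpr ⟨htS, ?_⟩
      have h1 := ytri t z' y₀
      have h2 := ysymm z' t
      linarith
    refine ⟨(key t htS').choose, ?_, ?_⟩
    · rw [hTdef]
      exact Finset.mem_image.mpr ⟨⟨t, htS'⟩, Finset.mem_attach _ _, rfl⟩
    · have hu := (key t htS').choose_spec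
      set u := (key t htS').choose
      have h1 : dc (Sum.inl z) (Sum.inl u) ≤
          dc (Sum.inl z) (Sum.inr z') + dc (Sum.inr z') (Sum.inl u) := ctri _ _ _
      have h2 : dc (Sum.inr z') (Sum.inl u) ≤
          dc (Sum.inr z') (Sum.inr t) + dc (Sum.inr t) (Sum.inl u) := ctri _ _ _
      have h3 : dc (Sum.inr z') (Sum.inr t) = dY z' t := cYY z' t
      have h4 : dc (Sum.inr t) (Sum.inl u) = dc (Sum.inl u) (Sum.inr t) := csymm _ _
      have h5 : dc (Sum.inl z) (Sum.inl u) = dist z u := cXX z u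
      simp only
      simp only [hr'def] at htz'
      linarith
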